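/- For every integer l ≥ 2 there exists a nondegenerate pseudo-complex fundamental graded Lie algebra (m = g_{−l} ⊕ ⋯ ⊕ g_{−1}, I) of type l whose Tanaka prolongation (g_i)_{i ≥ 0} satisfies g_l ≠ 0; in particular, there exist weighted homogeneous polynomial models of every length l ≥ 2 admitting infinitesimal CR automorphisms of positive weighted degree. -/

import Mathlib

noncomputable section

universe u

/-- Formal carrier for elements of the Tanaka prolongation spaces: `low v` represents an
element `v` of the negatively graded part (inside `m`), while `high F` represents a family
`(f_j)_{1 ≤ j ≤ l}` of maps `f_j : g_{-j} → g_{i-j}` (the component `f_j` is `F ⟨j-1, _⟩`). -/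
inductive FP (m : Type u) (l : ℕ) : Type u
  | low : m → FP m l
  | high : (Fin l → m → FP m l) → FP m l

namespace FP

variable {m : Type u} {l : ℕ} [LieRing m] [LieAlgebra ℝ m]

/-- Pointwise addition of formal prolongation elements (of the same degree). -/
def add : FP m l → FP m l → FP m l
  | low x, low y => low (x + y)
  | high F, high G => high fun j X => add (F j X) (G j X)
  | x, _ => x

/-- Pointwise negation. -/
def neg : FP m l → FP m l
  | low x => low (-x)
  | high F => high fun j X => neg (F j X)

/-- Pointwise scalar multiplication. -/
def smulR (c : ℝ) : FP m l → FP m l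
  | low x => low (c • x)
  | high F => high fun j X => smulR c (F j X)

/-- The mixed bracket `[h, W]` of a prolongation element `h` with `W ∈ g_{-(j+1)}`:
for `h` of negative degree it is the Lie bracket in `m`; for `h` of degree `k ≥ 0`
it is the evaluation `h(W)` of the component of `h` on `g_{-(j+1)}`. -/
def br (j : Fin l) : FP m l → m → FP m l
  | low x, W => low ⁅x, W⁆
  | high F, W => F j W

variable (g : ℤ → Submodule ℝ m)

/-- The two formal elements represent the same prolongation element (equality of the
underlying families of linear maps, i.e. equality of all values on the relevant domains). -/
def Eqv : FP m l → FP m l → Prop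
  | low x, low y => x = y
  | high F, high G => ∀ j : Fin l, ∀ X ∈ g (-(j + 1) : ℤ), Eqv (F j X) (G j X)
  | _, _ => False

/-- The formal element represents the zero element (the zero vector, resp. the family of
zero linear maps). -/
def IsZero : FP m l → Prop
  | low x => x = 0
  | high F => ∀ j : Fin l, ∀ X ∈ g (-(j + 1) : ℤ), IsZero (F j X)

/-- `Mem g I d x` : the formal element `x` is a member of the degree-`d` space of the
Tanaka prolongation of `(m = g_{-l} ⊕ ⋯ ⊕ g_{-1}, I)`.  For `d < 0` this is the space
`g_d`; for `d ≥ 0` it is the prolongation space defined inductively: a family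
`(f_j : g_{-j} → g_{d-j})_{1 ≤ j ≤ l}` of `ℝ`-linear maps (with values in `g_{d-j}`,
resp. in the previously defined prolongation space when `d - j ≥ 0`) satisfying the
Leibniz rule `f [X, Y] = [f X, Y] + [X, f Y]` for all homogeneous `X, Y ∈ m` (where the
bracket of a nonnegative degree element `h` with `W ∈ g_{-j}` is the evaluation `h(W)`,
and `[W, h] = -[h, W]`), and, in degree `0`, commuting with the complex structure `I`
on `g_{-1}` (a degree-`0` element is precisely a grading-preserving derivation of `m`,
recorded through its components `g_{-j} → g_{-j}`). -/
def Mem (I : ↥(g (-1)) →ₗ[ℝ] ↥(g (-1))) : ℤ → FP m l → Prop := fun d x =>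
  if 0 ≤ d then
    ∃ F : Fin l → m → FP m l, x = high F ∧
      (∀ j : Fin l,
        (∀ X ∈ g (-(j + 1) : ℤ), Mem I (d - (j + 1)) (F j X)) ∧
        (∀ X ∈ g (-(j + 1) : ℤ), ∀ Y ∈ g (-(j + 1) : ℤ),
          Eqv g (F j (X + Y)) (add (F j X) (F j Y))) ∧
        (∀ c : ℝ, ∀ X ∈ g (-(j + 1) : ℤ), Eqv g (F j (c • X)) (smulR c (F j X)))) ∧
      (∀ j j' : Fin l, ∀ X ∈ g (-(j + 1) : ℤ), ∀ Y ∈ g (-(j' + 1) : ℤ),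
        (∀ h : (j : ℕ) + (j' : ℕ) + 1 < l,
          Eqv g (F ⟨(j : ℕ) + (j' : ℕ) + 1, h⟩ ⁅X, Y⁆)
            (add (br j' (F j X) Y) (neg (br j (F j' Y) X)))) ∧
        (l ≤ (j : ℕ) + (j' : ℕ) + 1 →
          IsZero g (add (br j' (F j X) Y) (neg (br j (F j' Y) X))))) ∧
      (d = 0 → ∀ j : Fin l, (j : ℕ) = 0 → ∀ X v : ↥(g (-1)),
        Eqv g (F j (X : m)) (low (v : m)) →
          Eqv g (F j ((I X : ↥(g (-1))) : m)) (low ((I v : ↥(g (-1))) : m)))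
  else ∃ v : m, x = low v ∧ v ∈ g d
termination_by d _ => (d + 1).toNat
decreasing_by omega

end FP

/-- A nondegenerate pseudo-complex fundamental graded Lie algebra of type `l`:
a finite-dimensional real Lie algebra `m` with an internal grading
`m = g_{-l} ⊕ ⋯ ⊕ g_{-1}` (all other components being trivial), whose bracket respects
the grading, which is generated as a Lie algebra by `g_{-1}`, with `g_{-l} ≠ 0`,
together with a complex structure `I` on `g_{-1}` satisfying `[IX, IY] = [X, Y]`,
and which is Levi-nondegenerate. -/
structure IsPCF {m : Type u} [LieRing m] [LieAlgebra ℝ m] (l : ℕ)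
    (g : ℤ → Submodule ℝ m) (I : ↥(g (-1)) →ₗ[ℝ] ↥(g (-1))) : Prop where
  findim : FiniteDimensional ℝ m
  isInternal : DirectSum.IsInternal fun i : ℤ => g i
  supp : ∀ i : ℤ, ¬(-(l : ℤ) ≤ i ∧ i ≤ -1) → g i = ⊥
  grading : ∀ i j : ℤ, ∀ x ∈ g i, ∀ y ∈ g j, ⁅x, y⁆ ∈ g (i + j)
  nontriv : g (-(l : ℤ)) ≠ ⊥
  generated : LieSubalgebra.lieSpan ℝ m (g (-1) : Set m) = ⊤
  I_sq : ∀ X : ↥(g (-1)), I (I X) = -X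
  I_br : ∀ X Y : ↥(g (-1)),
    ⁅((I X : ↥(g (-1))) : m), ((I Y : ↥(g (-1))) : m)⁆ = ⁅(X : m), (Y : m)⁆
  nondeg : ∀ X : ↥(g (-1)), (∀ Y : ↥(g (-1)), ⁅(X : m), (Y : m)⁆ = 0) → X = 0

/-- A bundled nondegenerate pseudo-complex fundamental graded Lie algebra of type `l`. -/
structure PCFBundle (l : ℕ) where
  carrier : Type
  [lieRing : LieRing carrier]
  [lieAlg : LieAlgebra ℝ carrier]
  g : ℤ → Submodule ℝ carrier
  I : ↥(g (-1)) →ₗ[ℝ] ↥(g (-1))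
  pcf : IsPCF l g I

attribute [instance] PCFBundle.lieRing PCFBundle.lieAlg

/-- The degree-`l` space of the Tanaka prolongation of `P` is nonzero. -/
def PCFBundle.prolongDegLNonzero {l : ℕ} (P : PCFBundle l) : Prop :=
  ∃ x : FP P.carrier l, FP.Mem P.g P.I (l : ℤ) x ∧ ¬ FP.IsZero P.g x

attribute [local instance 100] LieRing.ofAssociativeRing LieAlgebra.ofAssociativeAlgebra

namespace Statement10

open Matrix

/-- ambient algebra: complex matrices viewed as a real Lie algebra -/
abbrev G (n : ℕ) : Type := Matrix (Fin n) (Fin n) ℂ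

/-- matrix with a single (possibly zero) entry -/
def zsingle {n : ℕ} (a b : Fin n) (z : ℂ) : G n :=
  Matrix.of fun i j => if i = a ∧ j = b then z else 0

lemma zsingle_apply {n : ℕ} (a b : Fin n) (z : ℂ) (i j : Fin n) :
    zsingle a b z i j = if i = a ∧ j = b then z else 0 := rfl

lemma zsingle_zero {n : ℕ} (a b : Fin n) : zsingle a b (0 : ℂ) = 0 := by
  funext i j
  simp [zsingle_apply]

lemma mul_zsingle_apply {n : ℕ} (A : G n) (c d : Fin n) (w : ℂ) (i j : Fin n) :
    (A * zsingle c d w) i j = if j = d then A i c * w else 0 := by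
  rw [Matrix.mul_apply]
  simp only [zsingle_apply, mul_ite, mul_zero, ite_and]
  by_cases h : j = d
  · simp [h]
  · simp [h]

lemma zsingle_mul_apply {n : ℕ} (A : G n) (c d : Fin n) (w : ℂ) (i j : Fin n) :
    (zsingle c d w * A) i j = if i = c then w * A d j else 0 := by
  rw [Matrix.mul_apply]
  simp only [zsingle_apply, ite_mul, zero_mul]
  by_cases h : i = c
  · simp [h]
  · simp [h]

lemma zsingle_mul_zsingle {n : ℕ} (a b c d : Fin n) (y w : ℂ) :
    zsingle a b y * zsingle c d w = if b = c then zsingle a d (y * w) else 0 := by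
  funext i j
  rw [mul_zsingle_apply]
  by_cases hbc : b = c
  · subst hbc
    rw [if_pos rfl]
    by_cases hj : j = d <;> by_cases hi : i = a <;>
      simp [hj, hi, zsingle_apply]
  · rw [if_neg hbc]
    have hz : zsingle a b y i c = 0 := by
      rw [zsingle_apply, if_neg]
      rintro ⟨-, h⟩
      exact hbc h.symm
    by_cases hj : j = d <;> simp [hj, hz]

/-- the strictly lower triangular matrices, as a real Lie subalgebra -/
def mSub (n : ℕ) : LieSubalgebra ℝ (G n) where
  carrier := {A | ∀ a b : Fin n, a ≤ b → A a b = 0}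
  add_mem' := by
    intro A B hA hB a b hab
    simp only [Matrix.add_apply, hA a b hab, hB a b hab, add_zero]
  zero_mem' := by intro a b _; rfl
  smul_mem' := by
    intro c A hA a b hab
    simp only [Matrix.smul_apply, hA a b hab, smul_zero]
  lie_mem' := by
    intro A B hA hB a b hab
    have h1 : ∀ (X Y : G n), (∀ a b : Fin n, a ≤ b → X a b = 0) →
        (∀ a b : Fin n, a ≤ b → Y a b = 0) → (X * Y) a b = 0 := by
      intro X Y hX hY
      rw [Matrix.mul_apply]
      apply Finset.sum_eq_zero
      intro k _
      by_cases hk : a ≤ k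
      · rw [hX a k hk, zero_mul]
      · rw [hY k b (le_trans (le_of_not_ge hk) hab), mul_zero]
    simp only [Ring.lie_def, Matrix.sub_apply, h1 A B hA hB, h1 B A hB hA, sub_zero]

lemma mem_mSub {n : ℕ} {A : G n} : A ∈ mSub n ↔ ∀ a b : Fin n, a ≤ b → A a b = 0 :=
  Iff.rfl

/-- the negative part: strictly lower triangular matrices -/
abbrev M (n : ℕ) : Type := ↥(mSub n)

/-- ambient degree subspaces (graded by diagonals) -/
def GDa (n : ℕ) (d : ℤ) : Submodule ℝ (G n) where
  carrier := {A | ∀ a b : Fin n, ((b : ℤ) - (a : ℤ) ≠ d) → A a b = 0}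
  add_mem' := by
    intro A B hA hB a b hab
    simp only [Matrix.add_apply, hA a b hab, hB a b hab, add_zero]
  zero_mem' := by intro a b _; rfl
  smul_mem' := by
    intro c A hA a b hab
    simp only [Matrix.smul_apply, hA a b hab, smul_zero]

lemma mem_GDa {n : ℕ} {d : ℤ} {A : G n} :
    A ∈ GDa n d ↔ ∀ a b : Fin n, ((b : ℤ) - (a : ℤ) ≠ d) → A a b = 0 := Iff.rfl

/-- the grading on `m` -/
def gr (n : ℕ) : ℤ → Submodule ℝ (M n) := fun d =>
  (GDa n d).comap ((mSub n).toSubmodule.subtype)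

lemma mem_gr {n : ℕ} {d : ℤ} {X : M n} :
    X ∈ gr n d ↔ ∀ a b : Fin n, ((b : ℤ) - (a : ℤ) ≠ d) → (X : G n) a b = 0 := Iff.rfl

lemma gda_mul {n : ℕ} {i j : ℤ} {A B : G n} (hA : A ∈ GDa n i) (hB : B ∈ GDa n j) :
    A * B ∈ GDa n (i + j) := by
  intro a b hab
  rw [Matrix.mul_apply]
  apply Finset.sum_eq_zero
  intro k _
  by_cases hk : ((k : ℤ) - (a : ℤ) = i)
  · rw [hB k b (by omega), mul_zero]
  · rw [hA a k hk, zero_mul]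

lemma gda_lie {n : ℕ} {i j k : ℤ} (hk : i + j = k) {A B : G n}
    (hA : A ∈ GDa n i) (hB : B ∈ GDa n j) : ⁅A, B⁆ ∈ GDa n k := by
  subst hk
  rw [Ring.lie_def]
  exact sub_mem (gda_mul hA hB) (by rw [add_comm]; exact gda_mul hB hA)

lemma gda_eq_zero {n : ℕ} {d : ℤ} (hd : d ≤ -(n : ℤ) ∨ (n : ℤ) ≤ d) {A : G n}
    (hA : A ∈ GDa n d) : A = 0 := by
  funext a b
  have ha := a.isLt
  have hb := b.isLt
  exact hA a b (by omega)

lemma gda_mem_mSub {n : ℕ} {d : ℤ} (hd : d < 0) {A : G n} (hA : A ∈ GDa n d) :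
    A ∈ mSub n := by
  intro a b hab
  have : (a : ℕ) ≤ (b : ℕ) := hab
  exact hA a b (by omega)

/-- projection onto the strictly lower triangular part -/
def pr {n : ℕ} (A : G n) : M n :=
  ⟨Matrix.of fun a b => if a ≤ b then 0 else A a b, fun a b hab => if_pos hab⟩

lemma pr_val {n : ℕ} (A : G n) (a b : Fin n) :
    (pr A : G n) a b = if a ≤ b then 0 else A a b := rfl

lemma pr_val_of_mem {n : ℕ} {A : G n} (hA : A ∈ mSub n) : (pr A : G n) = A := by
  funext a b
  rw [pr_val]
  by_cases hab : a ≤ b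
  · rw [if_pos hab, hA a b hab]
  · rw [if_neg hab]

lemma pr_add {n : ℕ} (A B : G n) : pr (A + B) = pr A + pr B := by
  apply Subtype.ext
  funext a b
  show _ = (pr A : G n) a b + (pr B : G n) a b
  rw [pr_val, pr_val, pr_val]
  by_cases hab : a ≤ b
  · simp [hab]
  · simp [hab]

lemma pr_neg {n : ℕ} (A : G n) : pr (-A) = -pr A := by
  apply Subtype.ext
  funext a b
  show _ = -((pr A : G n) a b)
  rw [pr_val, pr_val]
  by_cases hab : a ≤ b
  · simp [hab]
  · simp [hab]

lemma pr_smul {n : ℕ} (c : ℝ) (A : G n) : pr (c • A) = c • pr A := by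
  apply Subtype.ext
  funext a b
  show _ = c • ((pr A : G n) a b)
  rw [pr_val, pr_val]
  by_cases hab : a ≤ b
  · simp [hab]
  · simp [hab]

lemma pr_zero {n : ℕ} : pr (0 : G n) = 0 := by
  apply Subtype.ext
  funext a b
  rw [pr_val]
  simp

end Statement10


namespace Statement10

open Matrix

/-- the diagonal entries of the complex structure element `J` -/
def JD (n : ℕ) (a : Fin n) : ℂ := (-1 : ℂ) ^ (a : ℕ) * (Complex.I / 2)

/-- the complex structure element `J` (degree 0) -/
def Jm (n : ℕ) : G n := Matrix.diagonal (JD n)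

lemma lie_Jm_apply {n : ℕ} (A : G n) (a b : Fin n) :
    ⁅Jm n, A⁆ a b = (JD n a - JD n b) * A a b := by
  simp only [Ring.lie_def, Matrix.sub_apply, Jm, Matrix.diagonal_mul, Matrix.mul_diagonal]
  ring

lemma JD_eq_of_parity {n : ℕ} {a b : Fin n} (h : (a : ℕ) % 2 = (b : ℕ) % 2) :
    JD n a = JD n b := by
  unfold JD
  congr 1
  rcases Nat.even_or_odd (a : ℕ) with he | ho
  · rw [he.neg_one_pow, (Nat.even_iff.mpr ((Nat.even_iff.mp he) ▸ h.symm)).neg_one_pow]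
  · rw [ho.neg_one_pow, (Nat.odd_iff.mpr ((Nat.odd_iff.mp ho) ▸ h.symm)).neg_one_pow]

lemma JD_adj {n : ℕ} {a b : Fin n} (h : (a : ℕ) = (b : ℕ) + 1) :
    (JD n a - JD n b) * (JD n a - JD n b) = -1 := by
  unfold JD
  set t : ℂ := (-1 : ℂ) ^ (b : ℕ) with ht
  have ha : (-1 : ℂ) ^ (a : ℕ) = -t := by rw [h, pow_succ, ht]; ring
  have h2 : t * t = 1 := by
    rw [ht, ← pow_add]
    exact Even.neg_one_pow ⟨(b : ℕ), rfl⟩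
  have hI : Complex.I * Complex.I = -1 := Complex.I_mul_I
  calc ((-1:ℂ) ^ (a:ℕ) * (Complex.I/2) - t * (Complex.I/2)) *
        ((-1:ℂ) ^ (a:ℕ) * (Complex.I/2) - t * (Complex.I/2))
      = (t * t) * (Complex.I * Complex.I) := by rw [ha]; ring
    _ = -1 := by rw [h2, hI, one_mul]

lemma lie_Jm_mem_gda {n : ℕ} {d : ℤ} {A : G n} (hA : A ∈ GDa n d) :
    ⁅Jm n, A⁆ ∈ GDa n d := by
  intro a b hab
  rw [lie_Jm_apply, hA a b hab, mul_zero]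

lemma lie_Jm_gda0 {n : ℕ} {A : G n} (hA : A ∈ GDa n 0) : ⁅Jm n, A⁆ = 0 := by
  funext a b
  rw [lie_Jm_apply]
  by_cases h : ((b : ℤ) - (a : ℤ) ≠ 0)
  · rw [hA a b h, mul_zero]; rfl
  · have hab2 : (a : ℕ) = (b : ℕ) := by omega
    rw [show JD n a = JD n b from JD_eq_of_parity (by omega), sub_self, zero_mul]; rfl

lemma lie_Jm_gda_neg2 {n : ℕ} {A : G n} (hA : A ∈ GDa n (-2)) : ⁅Jm n, A⁆ = 0 := by
  funext a b
  rw [lie_Jm_apply]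
  by_cases h : ((b : ℤ) - (a : ℤ) ≠ -2)
  · rw [hA a b h, mul_zero]; rfl
  · have hab2 : (a : ℕ) = (b : ℕ) + 2 := by omega
    rw [show JD n a = JD n b from JD_eq_of_parity (by omega), sub_self, zero_mul]; rfl

lemma lie_Jm_sq {n : ℕ} {A : G n} (hA : A ∈ GDa n (-1)) :
    ⁅Jm n, ⁅Jm n, A⁆⁆ = -A := by
  funext a b
  rw [lie_Jm_apply, lie_Jm_apply]
  show _ = -(A a b)
  by_cases h : ((b : ℤ) - (a : ℤ) ≠ -1)
  · rw [hA a b h, mul_zero, mul_zero, neg_zero]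
  · rw [← mul_assoc, JD_adj (by omega), neg_one_mul]

/-- the complex structure on `g₋₁`, as bracketing with `J` -/
lemma mem_gr' {n : ℕ} {d : ℤ} {X : M n} : X ∈ gr n d ↔ ((X : G n) ∈ GDa n d) := Iff.rfl

def Imap (n : ℕ) : ↥(gr n (-1)) →ₗ[ℝ] ↥(gr n (-1)) where
  toFun X := ⟨pr ⁅Jm n, ((X : M n) : G n)⁆, by
    have h1 : ⁅Jm n, ((X : M n) : G n)⁆ ∈ GDa n (-1) :=
      lie_Jm_mem_gda (mem_gr'.mp X.2)
    rw [mem_gr', pr_val_of_mem (gda_mem_mSub (by omega) h1)]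
    exact h1⟩
  map_add' X Y := by
    apply Subtype.ext
    show pr _ = pr _ + pr _
    rw [← pr_add]
    congr 1
    rw [← lie_add]
    congr 1
  map_smul' c X := by
    apply Subtype.ext
    show pr _ = c • pr _
    rw [← pr_smul]
    congr 1
    rw [← lie_smul]
    congr 1

lemma Imap_val {n : ℕ} (X : ↥(gr n (-1))) :
    (((Imap n X : ↥(gr n (-1))) : M n) : G n) = ⁅Jm n, ((X : M n) : G n)⁆ :=
  pr_val_of_mem (gda_mem_mSub (by omega) (lie_Jm_mem_gda X.2))

end Statement10


namespace FP
variable {m : Type u} {l : ℕ} [LieRing m] [LieAlgebra ℝ m] (g : ℤ → Submodule ℝ m)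

theorem eqv_refl : ∀ x : FP m l, Eqv g x x
  | low _ => rfl
  | high F => fun j X _ => eqv_refl (F j X)

end FP

namespace Statement10

open Matrix

/-- realization of ambient degree-`d` elements as formal prolongation elements -/
def embed (l n : ℕ) : ℤ → G n → FP (M n) l := fun d y =>
  if _h : 0 ≤ d then
    FP.high (fun j X => embed l n (d - (j + 1)) ⁅y, (X : G n)⁆)
  else FP.low (pr y)
termination_by d _ => (d + 1).toNat
decreasing_by omega

theorem embed_def {l n : ℕ} (d : ℤ) (y : G n) :
    embed l n d y = if 0 ≤ d then
      FP.high (fun j X => embed l n (d - (j + 1)) ⁅y, (X : G n)⁆)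
    else FP.low (pr y) := by
  rw [embed]
  by_cases h : 0 ≤ d <;> simp [h]

theorem embed_add {l n : ℕ} : ∀ (d : ℤ) (y z : G n),
    embed l n d (y + z) = FP.add (embed l n d y) (embed l n d z)
  | d, y, z => by
    by_cases h : 0 ≤ d
    · rw [embed_def d (y + z), embed_def d y, embed_def d z, if_pos h, if_pos h, if_pos h]
      simp only [FP.add]
      congr 1
      funext j X
      rw [add_lie]
      exact embed_add (d - (j + 1)) ⁅y, (X : G n)⁆ ⁅z, (X : G n)⁆
    · rw [embed_def d (y + z), embed_def d y, embed_def d z, if_neg h, if_neg h, if_neg h]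
      simp only [FP.add]
      rw [pr_add]
termination_by d _ _ => (d + 1).toNat
decreasing_by omega

theorem embed_neg {l n : ℕ} : ∀ (d : ℤ) (y : G n),
    embed l n d (-y) = FP.neg (embed l n d y)
  | d, y => by
    by_cases h : 0 ≤ d
    · rw [embed_def d (-y), embed_def d y, if_pos h, if_pos h]
      simp only [FP.neg]
      congr 1
      funext j X
      rw [neg_lie]
      exact embed_neg (d - (j + 1)) ⁅y, (X : G n)⁆
    · rw [embed_def d (-y), embed_def d y, if_neg h, if_neg h]
      simp only [FP.neg]
      rw [pr_neg]
termination_by d _ => (d + 1).toNat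
decreasing_by omega

theorem embed_smul {l n : ℕ} : ∀ (d : ℤ) (c : ℝ) (y : G n),
    embed l n d (c • y) = FP.smulR c (embed l n d y)
  | d, c, y => by
    by_cases h : 0 ≤ d
    · rw [embed_def d (c • y), embed_def d y, if_pos h, if_pos h]
      simp only [FP.smulR]
      congr 1
      funext j X
      rw [smul_lie]
      exact embed_smul (d - (j + 1)) c ⁅y, (X : G n)⁆
    · rw [embed_def d (c • y), embed_def d y, if_neg h, if_neg h]
      simp only [FP.smulR]
      rw [pr_smul]
termination_by d _ _ => (d + 1).toNat
decreasing_by omega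

theorem isZero_embed_zero {l n : ℕ} : ∀ d : ℤ, FP.IsZero (gr n) (embed l n d (0 : G n))
  | d => by
    by_cases h : 0 ≤ d
    · rw [embed_def, if_pos h]
      intro j X _
      show FP.IsZero (gr n) (embed l n (d - (j + 1)) ⁅(0 : G n), (X : G n)⁆)
      rw [zero_lie]
      exact isZero_embed_zero (d - (j + 1))
    · rw [embed_def, if_neg h]
      show pr (0 : G n) = 0
      exact pr_zero
termination_by d => (d + 1).toNat
decreasing_by omega

theorem br_embed {l n : ℕ} (j' : Fin l) (d : ℤ) (z : G n) (hz : d < 0 → z ∈ mSub n)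
    (Y : M n) :
    FP.br j' (embed l n d z) Y = embed l n (d - (j' + 1)) ⁅z, (Y : G n)⁆ := by
  by_cases h : 0 ≤ d
  · rw [embed_def d z, if_pos h]
    rfl
  · have hz' := hz (by omega)
    rw [embed_def d z, if_neg h, embed_def (d - (j' + 1)),
      if_neg (by omega : ¬ (0 : ℤ) ≤ d - (j' + 1))]
    simp only [FP.br]
    congr 1
    apply Subtype.ext
    rw [LieSubalgebra.coe_bracket, pr_val_of_mem hz',
      pr_val_of_mem ((mSub n).lie_mem hz' Y.2)]

theorem eqv_embed_congr {l n : ℕ} {D1 D2 : ℤ} {A1 A2 : G n} (h1 : D1 = D2)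
    (h2 : A1 = A2) : FP.Eqv (gr n) (embed l n D1 A1) (embed l n D2 A2) := by
  subst h1; subst h2; exact FP.eqv_refl _ _

end Statement10


namespace Statement10

open Matrix

theorem mem_embed {l n : ℕ} (hn : n = l + 1) : ∀ (d : ℤ) (y : G n), y ∈ GDa n d →
    FP.Mem (gr n) (Imap n) d (embed l n d y)
  | d, y, hy => by
    rw [FP.Mem]
    by_cases hd : 0 ≤ d
    · rw [if_pos hd]
      refine ⟨fun j X => embed l n (d - (j + 1)) ⁅y, (X : G n)⁆,
        by rw [embed_def, if_pos hd], fun j => ⟨?_, ?_, ?_⟩,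
        fun j j' X hX Y hY => ⟨?_, ?_⟩, ?_⟩
      · -- membership in the lower prolongation space
        intro X hX
        exact mem_embed hn (d - (j + 1)) ⁅y, (X : G n)⁆
          (gda_lie (by ring) hy (mem_gr'.mp hX))
      · -- additivity
        intro X _ Y _
        beta_reduce
        have hco : ((X + Y : M n) : G n) = (X : G n) + (Y : G n) := rfl
        rw [hco, lie_add, embed_add]
        exact FP.eqv_refl _ _
      · -- scalar multiplication
        intro c X _
        beta_reduce
        have hco : ((c • X : M n) : G n) = c • (X : G n) := rfl
        rw [hco, lie_smul, embed_smul]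
        exact FP.eqv_refl _ _
      · -- Leibniz rule, inner case
        intro hlt
        beta_reduce
        rw [br_embed j' (d - (j + 1)) ⁅y, (X : G n)⁆
            (fun hneg => gda_mem_mSub hneg (gda_lie (by ring) hy (mem_gr'.mp hX))) Y,
          br_embed j (d - (j' + 1)) ⁅y, (Y : G n)⁆
            (fun hneg => gda_mem_mSub hneg (gda_lie (by ring) hy (mem_gr'.mp hY))) X,
          ← embed_neg,
          (by ring : d - (j' + 1) - (j + 1) = d - (j + 1) - (j' + 1)), ← embed_add]
        apply eqv_embed_congr
        · have hv : ((⟨(j : ℕ) + (j' : ℕ) + 1, hlt⟩ : Fin l) : ℕ) = (j : ℕ) + (j' : ℕ) + 1 := rfl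
          push_cast [hv]
          ring
        · rw [LieSubalgebra.coe_bracket, leibniz_lie]
          congr 1
          rw [← lie_skew ⁅y, (Y : G n)⁆ (X : G n), neg_neg]
      · -- Leibniz rule, outer (vanishing) case
        intro hge
        beta_reduce
        rw [br_embed j' (d - (j + 1)) ⁅y, (X : G n)⁆
            (fun hneg => gda_mem_mSub hneg (gda_lie (by ring) hy (mem_gr'.mp hX))) Y,
          br_embed j (d - (j' + 1)) ⁅y, (Y : G n)⁆
            (fun hneg => gda_mem_mSub hneg (gda_lie (by ring) hy (mem_gr'.mp hY))) X,
          ← embed_neg,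
          (by ring : d - (j' + 1) - (j + 1) = d - (j + 1) - (j' + 1)), ← embed_add]
        have harg : ⁅⁅y, (X : G n)⁆, (Y : G n)⁆ + -⁅⁅y, (Y : G n)⁆, (X : G n)⁆
            = ⁅y, ⁅(X : G n), (Y : G n)⁆⁆ := by
          rw [leibniz_lie]
          congr 1
          rw [← lie_skew ⁅y, (Y : G n)⁆ (X : G n), neg_neg]
        rw [harg]
        have hXY : ⁅(X : G n), (Y : G n)⁆ = 0 := by
          apply gda_eq_zero (n := n) (d := -((j : ℤ) + 1) + -((j' : ℤ) + 1))
          · left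
            have hj := j.isLt
            have hj' := j'.isLt
            omega
          · exact gda_lie rfl (mem_gr'.mp hX) (mem_gr'.mp hY)
        rw [hXY, lie_zero]
        exact isZero_embed_zero _
      · -- compatibility with the complex structure in degree 0
        intro hd0 j hj X v hEqv
        subst hd0
        beta_reduce at hEqv ⊢
        have hj1 : (0 : ℤ) - ((j : ℤ) + 1) = -1 := by omega
        rw [hj1] at hEqv ⊢
        rw [embed_def, if_neg (by omega : ¬ (0 : ℤ) ≤ -1)] at hEqv ⊢
        have hyX : ⁅y, ((X : M n) : G n)⁆ ∈ GDa n (-1) :=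
          gda_lie (by ring) hy (mem_gr'.mp X.2)
        have hEqv' : pr ⁅y, ((X : M n) : G n)⁆ = ((v : M n)) := hEqv
        have hv : ⁅y, ((X : M n) : G n)⁆ = ((v : M n) : G n) := by
          rw [← pr_val_of_mem (gda_mem_mSub (by omega) hyX), hEqv']
        show pr ⁅y, ((Imap n X : M n) : G n)⁆ = ((Imap n v : M n))
        apply Subtype.ext
        have hIX : ⁅y, ((Imap n X : M n) : G n)⁆ ∈ GDa n (-1) :=
          gda_lie (by ring) hy (mem_gr'.mp (Imap n X).2)
        rw [pr_val_of_mem (gda_mem_mSub (by omega) hIX), Imap_val, Imap_val]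
        rw [leibniz_lie, ← lie_skew y (Jm n), lie_Jm_gda0 hy, neg_zero, zero_lie, zero_add, hv]
    · rw [if_neg hd]
      refine ⟨pr y, by rw [embed_def, if_neg hd], ?_⟩
      rw [mem_gr', pr_val_of_mem (gda_mem_mSub (by omega) hy)]
      exact hy
termination_by d _ _ => (d + 1).toNat
decreasing_by omega

end Statement10


namespace Statement10

open Matrix

/-- single-entry elements of `m` -/
def eltM {n : ℕ} (a b : Fin n) (z : ℂ) (h : b < a) : M n :=
  ⟨zsingle a b z, by
    intro i j hij
    rw [zsingle_apply, if_neg]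
    rintro ⟨rfl, rfl⟩
    exact absurd hij (not_le.mpr h)⟩

lemma eltM_val {n : ℕ} (a b : Fin n) (z : ℂ) (h : b < a) :
    ((eltM a b z h : M n) : G n) = zsingle a b z := rfl

lemma eltM_mem_gr {n : ℕ} (a b : Fin n) (z : ℂ) (h : b < a) {d : ℤ}
    (hd : (b : ℤ) - (a : ℤ) = d) : eltM a b z h ∈ gr n d := by
  rw [mem_gr']
  intro i j hij
  rw [eltM_val, zsingle_apply, if_neg]
  rintro ⟨rfl, rfl⟩
  exact hij hd

/-- decomposition of an element of `m` into single-entry elements -/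
lemma sum_single {n : ℕ} (A : M n) :
    A = ∑ p : Fin n × Fin n,
      (if h : p.2 < p.1 then eltM p.1 p.2 ((A : G n) p.1 p.2) h else 0) := by
  apply Subtype.ext
  rw [AddSubmonoidClass.coe_finset_sum]
  funext i j
  rw [Matrix.sum_apply]
  have hterm : ∀ p : Fin n × Fin n,
      (((if h : p.2 < p.1 then eltM p.1 p.2 ((A : G n) p.1 p.2) h else 0 : M n) : G n)) i j
      = if p = (i, j) then (A : G n) i j else 0 := by
    intro p
    obtain ⟨p1, p2⟩ := p
    by_cases hij : (p1, p2) = (i, j)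
    · have h1 : p1 = i := (Prod.ext_iff.mp hij).1
      have h2 : p2 = j := (Prod.ext_iff.mp hij).2
      rw [← h1, ← h2, if_pos rfl]
      by_cases hp : p2 < p1
      · rw [dif_pos hp, eltM_val, zsingle_apply, if_pos ⟨rfl, rfl⟩]
      · rw [dif_neg hp]
        show (0 : G n) p1 p2 = (A : G n) p1 p2
        rw [(A.2 p1 p2 (not_lt.mp hp) : (A : G n) p1 p2 = 0)]
        rfl
    · rw [if_neg hij]
      by_cases hp : p2 < p1
      · rw [dif_pos hp, eltM_val, zsingle_apply, if_neg]
        rintro ⟨rfl, rfl⟩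
        exact hij rfl
      · rw [dif_neg hp]
        rfl
  rw [Finset.sum_congr rfl (fun p _ => hterm p), Finset.sum_ite_eq' Finset.univ (i, j)
    (fun _ => (A : G n) i j), if_pos (Finset.mem_univ _)]

lemma mem_of_single {n : ℕ} (A : M n) (S : Submodule ℝ (M n))
    (hS : ∀ (a b : Fin n) (h : b < a) (z : ℂ), eltM a b z h ∈ S) : A ∈ S := by
  rw [sum_single A]
  apply Submodule.sum_mem
  intro p _
  by_cases hp : p.2 < p.1
  · rw [dif_pos hp]
    exact hS p.1 p.2 hp _
  · rw [dif_neg hp]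
    exact S.zero_mem

lemma eltM_mem_lieSpan {n : ℕ} (k : ℕ) :
    ∀ (a b : Fin n) (h : b < a), (a : ℕ) = (b : ℕ) + k + 1 → ∀ z : ℂ,
    eltM a b z h ∈ LieSubalgebra.lieSpan ℝ (M n) ((gr n (-1) : Submodule ℝ (M n)) : Set (M n)) := by
  induction k with
  | zero =>
    intro a b h ha z
    apply LieSubalgebra.subset_lieSpan
    show eltM a b z h ∈ gr n (-1)
    exact eltM_mem_gr a b z h (by omega)
  | succ k ih =>
    intro a b h ha z
    have hmidlt : (b : ℕ) + k + 1 < n := by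
      have := a.isLt
      omega
    set mid : Fin n := ⟨(b : ℕ) + k + 1, hmidlt⟩ with hmid
    have h1 : mid < a := by
      rw [Fin.lt_def]
      show (b : ℕ) + k + 1 < (a : ℕ)
      omega
    have h2 : b < mid := by
      rw [Fin.lt_def]
      show (b : ℕ) < (b : ℕ) + k + 1
      omega
    have hbr : eltM a b z h = ⁅eltM a mid 1 h1, eltM mid b z h2⁆ := by
      apply Subtype.ext
      rw [LieSubalgebra.coe_bracket, eltM_val, eltM_val, eltM_val, Ring.lie_def,
        zsingle_mul_zsingle, zsingle_mul_zsingle, if_pos rfl,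
        if_neg (by intro hba; exact absurd (hba ▸ h) (lt_irrefl a)), one_mul, sub_zero]
    rw [hbr]
    apply LieSubalgebra.lie_mem
    · apply LieSubalgebra.subset_lieSpan
      show eltM a mid 1 h1 ∈ gr n (-1)
      apply eltM_mem_gr
      show ((b : ℕ) + k + 1 : ℕ) - (a : ℕ) = (-1 : ℤ)
      push_cast
      omega
    · exact ih mid b h2 rfl z

/-- complementary-support submodules, used for independence of the grading -/
def coGr (n : ℕ) (d : ℤ) : Submodule ℝ (M n) where
  carrier := {X | ∀ a b : Fin n, ((b : ℤ) - (a : ℤ) = d) → (X : G n) a b = 0}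
  add_mem' := by
    intro A B hA hB a b hab
    show ((A : G n) + (B : G n)) a b = 0
    rw [Matrix.add_apply, hA a b hab, hB a b hab, add_zero]
  zero_mem' := by intro a b _; rfl
  smul_mem' := by
    intro c A hA a b hab
    show (c • (A : G n)) a b = 0
    rw [Matrix.smul_apply, hA a b hab, smul_zero]

lemma isPCF (l : ℕ) (hl : 2 ≤ l) : IsPCF l (gr (l + 1)) (Imap (l + 1)) := by
  set n := l + 1 with hn
  constructor
  -- finite dimensionality
  · exact inferInstanceAs (FiniteDimensional ℝ ↥((mSub n).toSubmodule))
  -- internal direct sum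
  · apply DirectSum.isInternal_submodule_of_iSupIndep_of_iSup_eq_top
    · rw [iSupIndep_def]
      intro d
      rw [disjoint_iff_inf_le]
      intro X hX
      have h2 : X ∈ coGr n d := by
        have hle : (⨆ j, ⨆ (_ : j ≠ d), gr n j) ≤ coGr n d := by
          apply iSup_le
          intro d'
          apply iSup_le
          intro hd'
          intro Y hY a b hab
          exact hY a b (by rw [hab]; exact hd'.symm)
        exact hle hX.2
      have h1 : X ∈ gr n d := hX.1
      rw [Submodule.mem_bot]
      apply Subtype.ext
      funext a b
      show (X : G n) a b = (0 : G n) a b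
      by_cases hab : (b : ℤ) - (a : ℤ) = d
      · rw [h2 a b hab]; rfl
      · rw [mem_gr'.mp h1 a b hab]; rfl
    · rw [eq_top_iff]
      intro A _
      apply mem_of_single A
      intro a b h z
      have : eltM a b z h ∈ gr n ((b : ℤ) - (a : ℤ)) := eltM_mem_gr a b z h rfl
      exact Submodule.mem_iSup_of_mem ((b : ℤ) - (a : ℤ)) this
  -- support
  · intro i hi
    rw [eq_bot_iff]
    intro X hX
    rw [Submodule.mem_bot]
    apply Subtype.ext
    funext a b
    show (X : G n) a b = (0 : G n) a b
    by_cases hab : (b : ℤ) - (a : ℤ) = i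
    · have ha := a.isLt
      have hb := b.isLt
      have hab2 : (a : ℕ) ≤ (b : ℕ) := by omega
      rw [(X : M n).2 a b hab2]
      rfl
    · rw [mem_gr'.mp hX a b hab]
      rfl
  -- grading
  · intro i j x hx y hy
    rw [mem_gr', LieSubalgebra.coe_bracket]
    exact gda_lie rfl (mem_gr'.mp hx) (mem_gr'.mp hy)
  -- nontriviality in degree -l
  · intro hbot
    have h0 : ((⟨0, by omega⟩ : Fin n) : Fin n) < ⟨l, by omega⟩ := by
      rw [Fin.lt_def]
      show 0 < l
      omega
    have hmem : eltM ⟨l, by omega⟩ ⟨0, by omega⟩ 1 h0 ∈ gr n (-(l : ℤ)) := by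
      apply eltM_mem_gr
      show ((0 : ℕ) : ℤ) - ((l : ℕ) : ℤ) = -(l : ℤ)
      push_cast
      ring
    rw [hbot, Submodule.mem_bot] at hmem
    have hval := congrArg (fun X : M n => (X : G n) ⟨l, by omega⟩ ⟨0, by omega⟩) hmem
    beta_reduce at hval
    rw [eltM_val, zsingle_apply, if_pos ⟨rfl, rfl⟩] at hval
    exact one_ne_zero (hval.trans rfl)
  -- generated by g₋₁
  · rw [eq_top_iff]
    intro A _
    have : A ∈ (LieSubalgebra.lieSpan ℝ (M n)
        ((gr n (-1) : Submodule ℝ (M n)) : Set (M n))).toSubmodule := by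
      apply mem_of_single A
      intro a b h z
      have hdist : (a : ℕ) = (b : ℕ) + ((a : ℕ) - (b : ℕ) - 1) + 1 := by
        have := h
        rw [Fin.lt_def] at this
        omega
      exact eltM_mem_lieSpan ((a : ℕ) - (b : ℕ) - 1) a b h hdist z
    exact this
  -- I ∘ I = -1
  · intro X
    apply Subtype.ext
    apply Subtype.ext
    rw [Imap_val, Imap_val, lie_Jm_sq (mem_gr'.mp X.2)]
    rfl
  -- [IX, IY] = [X, Y]
  · intro X Y
    apply Subtype.ext
    rw [LieSubalgebra.coe_bracket, LieSubalgebra.coe_bracket, Imap_val, Imap_val]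
    have hX := mem_gr'.mp X.2
    have hY := mem_gr'.mp Y.2
    rw [lie_lie, lie_Jm_sq hY,
      lie_Jm_gda_neg2 (gda_lie (by ring) hX (lie_Jm_mem_gda hY)), lie_neg, zero_sub, neg_neg]
  -- nondegeneracy
  · intro X hX
    apply Subtype.ext
    apply Subtype.ext
    funext a b
    show ((X : M n) : G n) a b = (0 : G n) a b
    have hzero : (0 : G n) a b = 0 := rfl
    rw [hzero]
    by_cases hab : (b : ℤ) - (a : ℤ) = -1
    case neg => exact (mem_gr'.mp X.2) a b hab
    case pos =>
    have hab2 : (a : ℕ) = (b : ℕ) + 1 := by omega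
    by_cases hb : 0 < (b : ℕ)
    · -- use Y = E_{b, b-1}
      have hblt : (b : ℕ) - 1 < n := by have := b.isLt; omega
      set c : Fin n := ⟨(b : ℕ) - 1, hblt⟩ with hc
      have hcb : c < b := by rw [Fin.lt_def]; show (b : ℕ) - 1 < (b : ℕ); omega
      have hmem : eltM b c 1 hcb ∈ gr n (-1) := by
        apply eltM_mem_gr
        show (((b : ℕ) - 1 : ℕ) : ℤ) - ((b : ℕ) : ℤ) = -1
        omega
      have hbr := hX ⟨eltM b c 1 hcb, hmem⟩
      have hval := congrArg (fun W : M n => (W : G n) a c) hbr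
      simp only [LieSubalgebra.coe_bracket] at hval
      rw [Ring.lie_def] at hval
      have h1 : (((X : M n) : G n) * zsingle b c 1) a c = ((X : M n) : G n) a b := by
        rw [mul_zsingle_apply, if_pos rfl, mul_one]
      have h2 : (zsingle b c 1 * ((X : M n) : G n)) a c = 0 := by
        rw [zsingle_mul_apply, if_neg]
        intro hab3
        rw [hab3] at hab2
        omega
      rw [Matrix.sub_apply] at hval
      rw [show ((eltM b c 1 hcb : M n) : G n) = zsingle b c 1 from rfl] at hval
      rw [h1, h2, sub_zero] at hval
      exact hval
    · -- b = 0 : use Y = E_{2,1}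
      have h2n : 2 < n := by omega
      set c2 : Fin n := ⟨2, h2n⟩ with hc2
      set c1 : Fin n := ⟨1, by omega⟩ with hc1
      have hc12 : c1 < c2 := by rw [Fin.lt_def]; show 1 < 2; omega
      have hmem : eltM c2 c1 1 hc12 ∈ gr n (-1) := by
        apply eltM_mem_gr
        show ((1 : ℕ) : ℤ) - ((2 : ℕ) : ℤ) = -1
        omega
      have hbr := hX ⟨eltM c2 c1 1 hc12, hmem⟩
      have hval := congrArg (fun W : M n => (W : G n) c2 b) hbr
      simp only [LieSubalgebra.coe_bracket] at hval
      rw [Ring.lie_def] at hval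
      have h1 : (((X : M n) : G n) * zsingle c2 c1 1) c2 b = 0 := by
        rw [mul_zsingle_apply, if_neg]
        intro hb3
        rw [hb3] at hb
        exact hb (by show 0 < 1; omega)
      have h2 : (zsingle c2 c1 1 * ((X : M n) : G n)) c2 b = ((X : M n) : G n) a b := by
        rw [zsingle_mul_apply, if_pos rfl, one_mul]
        have hc1v : (c1 : ℕ) = 1 := rfl
        have hac : c1 = a := Fin.ext (by omega)
        rw [hac]
      rw [Matrix.sub_apply] at hval
      rw [show ((eltM c2 c1 1 hc12 : M n) : G n) = zsingle c2 c1 1 from rfl] at hval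
      rw [h1, h2, zero_sub] at hval
      have hval2 : -((X : M n) : G n) a b = 0 := hval.trans rfl
      exact neg_eq_zero.mp hval2

end Statement10


/-- the bundled example -/
def Statement10.bundle (l : ℕ) (hl : 2 ≤ l) : PCFBundle l where
  carrier := Statement10.M (l + 1)
  g := Statement10.gr (l + 1)
  I := Statement10.Imap (l + 1)
  pcf := Statement10.isPCF l hl

/-- For every `l ≥ 2` there exists a nondegenerate pseudo-complex
fundamental graded Lie algebra `(m = g_{-l} ⊕ ⋯ ⊕ g_{-1}, I)` of type `l` whose Tanaka
prolongation `(g_i)_{i ≥ 0}` satisfies `g_l ≠ 0` (in particular, there exist weighted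
homogeneous polynomial models of every length `l ≥ 2` admitting infinitesimal CR
automorphisms of positive weighted degree). -/
theorem exists_pcf_with_nonzero_top_prolongation (l : ℕ) (hl : 2 ≤ l) :
    ∃ P : PCFBundle l, P.prolongDegLNonzero := by
  classical
  refine ⟨Statement10.bundle l hl, ?_⟩
  show ∃ x : FP (Statement10.M (l + 1)) l,
    FP.Mem (Statement10.gr (l + 1)) (Statement10.Imap (l + 1)) (l : ℤ) x ∧
      ¬ FP.IsZero (Statement10.gr (l + 1)) x
  set n := l + 1 with hn
  have h0n : 0 < n := by omega
  have h1n : 1 < n := by omega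
  have hln : l < n := by omega
  set a0 : Fin n := ⟨0, h0n⟩ with ha0
  set a1 : Fin n := ⟨1, h1n⟩ with ha1
  set al : Fin n := ⟨l, hln⟩ with hal
  have ha0v : (a0 : ℕ) = 0 := rfl
  have ha1v : (a1 : ℕ) = 1 := rfl
  have halv : (al : ℕ) = l := rfl
  set x0 : Statement10.G n := Statement10.zsingle a0 al 1 with hx0def
  have hx0 : x0 ∈ Statement10.GDa n (l : ℤ) := by
    intro i j hij
    rw [hx0def, Statement10.zsingle_apply, if_neg]
    rintro ⟨rfl, rfl⟩
    exact hij (by omega)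
  refine ⟨Statement10.embed l n (l : ℤ) x0, Statement10.mem_embed rfl (l : ℤ) x0 hx0, ?_⟩
  intro hz
  rw [Statement10.embed_def, if_pos (Int.natCast_nonneg l)] at hz
  have hl1 : l - 1 < l := by omega
  set j1 : Fin l := ⟨l - 1, hl1⟩ with hj1
  have hj1v : (j1 : ℕ) = l - 1 := rfl
  set j0 : Fin l := ⟨0, by omega⟩ with hj0
  have hj0v : (j0 : ℕ) = 0 := rfl
  have h0l : a0 < al := by rw [Fin.lt_def]; omega
  have h01 : a0 < a1 := by rw [Fin.lt_def]; omega
  have hX1 : Statement10.eltM al a0 1 h0l ∈ Statement10.gr n (-(j1 + 1 : ℤ)) :=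
    Statement10.eltM_mem_gr al a0 1 h0l (by omega)
  have h1 := hz j1 (Statement10.eltM al a0 1 h0l) hX1
  beta_reduce at h1
  rw [Statement10.embed_def, if_pos (by omega : (0 : ℤ) ≤ (l : ℤ) - ((j1 : ℤ) + 1))] at h1
  have hX2 : Statement10.eltM a1 a0 1 h01 ∈ Statement10.gr n (-(j0 + 1 : ℤ)) :=
    Statement10.eltM_mem_gr a1 a0 1 h01 (by omega)
  have h2 := h1 j0 (Statement10.eltM a1 a0 1 h01) hX2
  beta_reduce at h2
  rw [Statement10.embed_def,
    if_neg (by omega : ¬ (0 : ℤ) ≤ (l : ℤ) - ((j1 : ℤ) + 1) - ((j0 : ℤ) + 1))] at h2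
  have h3 : Statement10.pr
      ⁅⁅x0, ((Statement10.eltM al a0 1 h0l : Statement10.M n) : Statement10.G n)⁆,
        ((Statement10.eltM a1 a0 1 h01 : Statement10.M n) : Statement10.G n)⁆ = 0 := h2
  have hz1 : ⁅x0, ((Statement10.eltM al a0 1 h0l : Statement10.M n) : Statement10.G n)⁆
      = Statement10.zsingle a0 a0 1 - Statement10.zsingle al al 1 := by
    rw [Statement10.eltM_val, hx0def, Ring.lie_def, Statement10.zsingle_mul_zsingle,
      Statement10.zsingle_mul_zsingle, if_pos rfl, if_pos rfl, one_mul]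
  rw [hz1] at h3
  have h4 := congrArg (fun W : Statement10.M n => (W : Statement10.G n) a1 a0) h3
  beta_reduce at h4
  rw [Statement10.pr_val, if_neg (not_le.mpr h01)] at h4
  have hne10 : ¬(a1 = a0 ∧ a1 = a0) := by
    rintro ⟨h, -⟩
    have := congrArg Fin.val h
    omega
  have hne1l : ¬(a1 = al ∧ a1 = al) := by
    rintro ⟨h, -⟩
    have := congrArg Fin.val h
    omega
  have hne0l : ¬(a0 = al ∧ a0 = al) := by
    rintro ⟨h, -⟩
    have := congrArg Fin.val h
    omega
  have hA : ((Statement10.zsingle a0 a0 1 - Statement10.zsingle al al (1 : ℂ))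
      * Statement10.zsingle a1 a0 1) a1 a0 = 0 := by
    rw [Statement10.mul_zsingle_apply, if_pos rfl, Matrix.sub_apply,
      Statement10.zsingle_apply, Statement10.zsingle_apply, if_neg hne10, if_neg hne1l]
    ring
  have hB : (Statement10.zsingle a1 a0 1 *
      (Statement10.zsingle a0 a0 1 - Statement10.zsingle al al (1 : ℂ))) a1 a0 = 1 := by
    rw [Statement10.zsingle_mul_apply, if_pos rfl, Matrix.sub_apply,
      Statement10.zsingle_apply, Statement10.zsingle_apply, if_pos ⟨rfl, rfl⟩, if_neg hne0l]
    ring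
  rw [Ring.lie_def, Statement10.eltM_val, Matrix.sub_apply, hA, hB] at h4
  have hzero : ((0 : Statement10.M n) : Statement10.G n) a1 a0 = 0 := rfl
  rw [hzero] at h4
  norm_num at h4

end
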